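/- There is an exact sequence 1 → Aut^{N,H}(G) → Aut_N^H(G) →^{τ₁} C₁ →^{λ₁} H²(H, N), where τ₁ is restriction to N and λ₁(θ) = [μ·θ(μ)⁻¹]. That is: τ₁ is injective on Aut_N^H(G)/Aut^{N,H}(G) with kernel Aut^{N,H}(G), and the image of τ₁ equals the set of θ ∈ C₁ with λ₁(θ) = 1. -/

import Mathlib

/-- AC helper: prove commutative group identities via `abel` on `Additive`. -/
private theorem mul_ac_helper1 {M : Type*} [CommGroup M] (b c m tm x y : M) :
    c * b * (m * tm⁻¹) * (tm * x * y) = m * (b * x) * (c * y) := by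
  have h : Additive.ofMul (c * b * (m * tm⁻¹) * (tm * x * y))
      = Additive.ofMul (m * (b * x) * (c * y)) := by
    simp only [ofMul_mul, ofMul_inv]; abel
  exact h

private theorem mul_ac_helper2 {M : Type*} [CommGroup M] (a b c d : M) :
    a * d⁻¹ = b⁻¹ * c⁻¹ * (a * (b * c) * d⁻¹) := by
  have h : Additive.ofMul (a * d⁻¹)
      = Additive.ofMul (b⁻¹ * c⁻¹ * (a * (b * c) * d⁻¹)) := by
    simp only [ofMul_mul, ofMul_inv]; abel
  exact h

/-- Exactness of
1 → Aut^{N,H}(G) → Aut_N^H(G) →^{τ₁} C₁ →^{λ₁} H²(H,N):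
any automorphism inducing the identity on H normalizes N, and θ ∈ C₁ is the
restriction of some automorphism of G normalizing N and inducing the identity on
H = G/N if and only if λ₁(θ) = [k_θ] is trivial, i.e. k_θ(x,y) = μ(x,y)·θ(μ(x,y))⁻¹
is the 2-coboundary (χ(x)⁻¹)^{t(y)}·χ(y)⁻¹·χ(xy) of some χ : H → N with χ(1)=1. -/
theorem stmt_8 {G : Type*} [Group G] (N : Subgroup G) [N.Normal]
    (hcomm : ∀ a b : N, a * b = b * a)
    (t : G ⧸ N → G) (ht : ∀ x : G ⧸ N, (QuotientGroup.mk (t x) : G ⧸ N) = x)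
    (ht1 : t 1 = 1)
    (μ : G ⧸ N → G ⧸ N → N)
    (hμ : ∀ x y : G ⧸ N, t (x * y) * (μ x y : G) = t x * t y)
    (θ : N ≃* N)
    (hθ : ∀ (n m : N) (x : G ⧸ N),
      (n : G) = (t x)⁻¹ * (m : G) * t x →
        (θ n : G) = (t x)⁻¹ * (θ m : G) * t x) :
    (∀ γ : G ≃* G,
      (∀ g : G, (QuotientGroup.mk (γ g) : G ⧸ N) = QuotientGroup.mk g) →
        ∀ n ∈ N, γ n ∈ N) ∧
    ((∃ γ : G ≃* G,
        (∀ n ∈ N, γ n ∈ N) ∧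
        (∀ n : N, γ n = (θ n : G)) ∧
        (∀ g : G, (QuotientGroup.mk (γ g) : G ⧸ N) = QuotientGroup.mk g)) ↔
      ∃ χ : G ⧸ N → N, χ 1 = 1 ∧
        ∀ x y : G ⧸ N,
          (μ x y : G) * ((θ (μ x y) : G))⁻¹ =
            ((t y)⁻¹ * ((χ x : G))⁻¹ * t y) * ((χ y : G))⁻¹ * (χ (x * y) : G)) := by
  letI : CommGroup N := { (inferInstance : Group N) with mul_comm := hcomm }
  -- conjugation by t y as a map N → N
  have hconj : ∀ (y : G ⧸ N) (n : N), (t y)⁻¹ * (n : G) * t y ∈ N := by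
    intro y n
    simpa using ‹N.Normal›.conj_mem n n.2 (t y)⁻¹
  let cy : G ⧸ N → N → N := fun y n => ⟨(t y)⁻¹ * (n : G) * t y, hconj y n⟩
  have hcy : ∀ (y : G ⧸ N) (n : N), (cy y n : G) = (t y)⁻¹ * (n : G) * t y :=
    fun _ _ => rfl
  have hcy_mul : ∀ (y : G ⧸ N) (n m : N), cy y (n * m) = cy y n * cy y m := by
    intro y n m
    apply Subtype.ext
    push_cast [hcy]
    group
  have hθc : ∀ (y : G ⧸ N) (n : N), θ (cy y n) = cy y (θ n) := by
    intro y n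
    apply Subtype.ext
    rw [hcy]
    exact hθ (cy y n) n y rfl
  -- decomposition of elements of G
  have hmem : ∀ g : G, (t (QuotientGroup.mk g))⁻¹ * g ∈ N := by
    intro g
    rw [← QuotientGroup.eq_one_iff, QuotientGroup.mk_mul, QuotientGroup.mk_inv, ht]
    group
  let ν : G → N := fun g => ⟨(t (QuotientGroup.mk g))⁻¹ * g, hmem g⟩
  have hν : ∀ g : G, (ν g : G) = (t (QuotientGroup.mk g))⁻¹ * g := fun _ => rfl
  have hdec : ∀ g : G, g = t (QuotientGroup.mk g) * (ν g : G) := by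
    intro g; rw [hν]; group
  have hmk_aux : ∀ (x : G ⧸ N) (n : N),
      (QuotientGroup.mk (t x * (n : G)) : G ⧸ N) = x := by
    intro x n
    rw [QuotientGroup.mk_mul, ht, (QuotientGroup.eq_one_iff (n : G)).mpr n.2, mul_one]
  have hν_aux : ∀ (x : G ⧸ N) (n : N), ν (t x * (n : G)) = n := by
    intro x n
    apply Subtype.ext
    rw [hν, hmk_aux]
    group
  constructor
  · -- any automorphism inducing identity on the quotient normalizes N
    intro γ hγ n hn
    have h1 : (QuotientGroup.mk (γ n) : G ⧸ N) = 1 := by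
      rw [hγ n, QuotientGroup.eq_one_iff]
      exact hn
    exact (QuotientGroup.eq_one_iff _).mp h1
  constructor
  · -- forward: from γ construct χ
    rintro ⟨γ, _hN, hres, hπ⟩
    have hχmem : ∀ x : G ⧸ N, (t x)⁻¹ * γ (t x) ∈ N := by
      intro x
      rw [← QuotientGroup.eq_one_iff, QuotientGroup.mk_mul, QuotientGroup.mk_inv,
        hπ, ht]
      group
    refine ⟨fun x => ⟨(t x)⁻¹ * γ (t x), hχmem x⟩, ?_, ?_⟩
    · apply Subtype.ext
      show (t 1)⁻¹ * γ (t 1) = (1 : G)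
      rw [ht1, map_one]
      group
    · intro x y
      set χ : G ⧸ N → N := fun x => ⟨(t x)⁻¹ * γ (t x), hχmem x⟩ with hχdef
      have hχ : ∀ z : G ⧸ N, (χ z : G) = (t z)⁻¹ * γ (t z) := fun _ => rfl
      have F3 : ∀ z : G ⧸ N, γ (t z) = t z * (χ z : G) := by
        intro z; rw [hχ]; group
      have F2 : γ (t (x * y)) * ((θ (μ x y) : N) : G) = γ (t x) * γ (t y) := by
        rw [← hres, ← map_mul, hμ, map_mul]
      have E1 : t (x * y) * (χ (x * y) : G) * ((θ (μ x y) : N) : G)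
          = (t x * (χ x : G)) * (t y * (χ y : G)) := by
        rw [← F3, ← F3, ← F3]; exact F2
      have htx : t (x * y) = t x * t y * ((μ x y : G))⁻¹ := by
        rw [← hμ x y]; group
      -- N-level key identity
      have key : (μ x y)⁻¹ * χ (x * y) * θ (μ x y) = cy y (χ x) * χ y := by
        apply Subtype.ext
        push_cast
        rw [hcy]
        refine mul_left_cancel (a := t x * t y) ?_
        calc t x * t y * ((μ x y : G)⁻¹ * (χ (x * y) : G) * (θ (μ x y) : G))
            = t (x * y) * (χ (x * y) : G) * ((θ (μ x y) : N) : G) := by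
              rw [htx]; group
          _ = (t x * (χ x : G)) * (t y * (χ y : G)) := E1
          _ = t x * t y * ((t y)⁻¹ * (χ x : G) * t y * (χ y : G)) := by group
      have hD : χ (x * y) = μ x y * (cy y (χ x) * χ y) * (θ (μ x y))⁻¹ := by
        rw [← key]; group
      have T : μ x y * (θ (μ x y))⁻¹ = (cy y (χ x))⁻¹ * (χ y)⁻¹ * χ (x * y) := by
        rw [hD]
        exact mul_ac_helper2 (μ x y) (cy y (χ x)) (χ y) (θ (μ x y))
      calc (μ x y : G) * ((θ (μ x y) : G))⁻¹
          = ((μ x y * (θ (μ x y))⁻¹ : N) : G) := by push_cast; rfl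
        _ = (((cy y (χ x))⁻¹ * (χ y)⁻¹ * χ (x * y) : N) : G) := by rw [T]
        _ = ((t y)⁻¹ * ((χ x : G))⁻¹ * t y) * ((χ y : G))⁻¹ * (χ (x * y) : G) := by
              push_cast [hcy]
              group
  · -- reverse: from χ construct γ
    rintro ⟨χ, hχ1, hχ⟩
    -- N-level form of the coboundary condition
    have E : ∀ x y : G ⧸ N,
        μ x y * (θ (μ x y))⁻¹ = (cy y (χ x))⁻¹ * (χ y)⁻¹ * χ (x * y) := by
      intro x y
      apply Subtype.ext
      push_cast [hcy]
      rw [hχ x y]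
      group
    have hχ' : ∀ x y : G ⧸ N,
        χ (x * y) = χ y * cy y (χ x) * (μ x y * (θ (μ x y))⁻¹) := by
      intro x y
      rw [E x y]
      group
    -- multiplication rule for ν
    have hν_mul : ∀ g h : G,
        ν (g * h) = μ (QuotientGroup.mk g) (QuotientGroup.mk h)
          * cy (QuotientGroup.mk h) (ν g) * ν h := by
      intro g h
      apply Subtype.ext
      push_cast
      rw [hcy, hν, hν, hν]
      have h2 : (QuotientGroup.mk (g * h) : G ⧸ N)
          = QuotientGroup.mk g * QuotientGroup.mk h := by
        rw [QuotientGroup.mk_mul]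
      rw [h2]
      have h3 : t (QuotientGroup.mk g * QuotientGroup.mk h)
          = t (QuotientGroup.mk g) * t (QuotientGroup.mk h)
            * ((μ (QuotientGroup.mk g) (QuotientGroup.mk h) : G))⁻¹ := by
        rw [← hμ]; group
      rw [h3]
      group
    -- the maps
    let f : G → G := fun g =>
      t (QuotientGroup.mk g) * ((χ (QuotientGroup.mk g) * θ (ν g) : N) : G)
    let finv : G → G := fun g =>
      t (QuotientGroup.mk g)
        * (((θ.symm (χ (QuotientGroup.mk g)))⁻¹ * θ.symm (ν g) : N) : G)
    have hf_eval : ∀ (x : G ⧸ N) (n : N),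
        f (t x * (n : G)) = t x * ((χ x * θ n : N) : G) := by
      intro x n
      show t (QuotientGroup.mk (t x * (n : G)))
          * ((χ (QuotientGroup.mk (t x * (n : G))) * θ (ν (t x * (n : G))) : N) : G)
        = t x * ((χ x * θ n : N) : G)
      rw [hν_aux, hmk_aux]
    have hfinv_eval : ∀ (x : G ⧸ N) (n : N),
        finv (t x * (n : G)) = t x * (((θ.symm (χ x))⁻¹ * θ.symm n : N) : G) := by
      intro x n
      show t (QuotientGroup.mk (t x * (n : G)))
          * (((θ.symm (χ (QuotientGroup.mk (t x * (n : G)))))⁻¹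
              * θ.symm (ν (t x * (n : G))) : N) : G)
        = t x * (((θ.symm (χ x))⁻¹ * θ.symm n : N) : G)
      rw [hν_aux, hmk_aux]
    have hfg : ∀ g : G, f g = t (QuotientGroup.mk g)
        * ((χ (QuotientGroup.mk g) * θ (ν g) : N) : G) := fun _ => rfl
    have hlr : ∀ g : G, finv (f g) = g := by
      intro g
      rw [hfg, hfinv_eval]
      have : (θ.symm (χ (QuotientGroup.mk g)))⁻¹
          * θ.symm (χ (QuotientGroup.mk g) * θ (ν g)) = ν g := by
        rw [map_mul, MulEquiv.symm_apply_apply]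
        group
      rw [this, ← hdec]
    have hrl : ∀ g : G, f (finv g) = g := by
      intro g
      have hfinvg : finv g = t (QuotientGroup.mk g)
          * (((θ.symm (χ (QuotientGroup.mk g)))⁻¹ * θ.symm (ν g) : N) : G) := rfl
      rw [hfinvg, hf_eval]
      have : χ (QuotientGroup.mk g)
          * θ ((θ.symm (χ (QuotientGroup.mk g)))⁻¹ * θ.symm (ν g)) = ν g := by
        rw [map_mul, map_inv, MulEquiv.apply_symm_apply, MulEquiv.apply_symm_apply]
        group
      rw [this, ← hdec]
    -- multiplicativity
    have hmul : ∀ g h : G, f (g * h) = f g * f h := by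
      intro g h
      set x := (QuotientGroup.mk g : G ⧸ N) with hx
      set y := (QuotientGroup.mk h : G ⧸ N) with hy
      have h2 : (QuotientGroup.mk (g * h) : G ⧸ N) = x * y := by
        rw [QuotientGroup.mk_mul]
      have h3 : t (x * y) = t x * t y * ((μ x y : G))⁻¹ := by
        rw [← hμ]; group
      -- N-level key equation
      have key : χ (x * y) * θ (ν (g * h))
          = μ x y * cy y (χ x * θ (ν g)) * (χ y * θ (ν h)) := by
        have h4 : ν (g * h) = μ x y * cy y (ν g) * ν h := hν_mul g h
        rw [h4, map_mul, map_mul, hθc, hcy_mul, hχ' x y]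
        exact mul_ac_helper1 (cy y (χ x)) (χ y) (μ x y) (θ (μ x y))
          (cy y (θ (ν g))) (θ (ν h))
      have hcoe : ((χ (x * y) * θ (ν (g * h)) : N) : G)
          = (μ x y : G) * ((t y)⁻¹ * ((χ x * θ (ν g) : N) : G) * t y)
            * ((χ y * θ (ν h) : N) : G) := by
        rw [key]
        push_cast [hcy]
        group
      show t (QuotientGroup.mk (g * h)) * ((χ (QuotientGroup.mk (g * h))
          * θ (ν (g * h)) : N) : G)
        = (t x * ((χ x * θ (ν g) : N) : G)) * (t y * ((χ y * θ (ν h) : N) : G))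
      rw [h2, h3, hcoe]
      group
    -- assemble the automorphism
    refine ⟨⟨⟨f, finv, hlr, hrl⟩, hmul⟩, ?_, ?_, ?_⟩
    · intro n hn
      show f n ∈ N
      have h1 : (QuotientGroup.mk n : G ⧸ N) = 1 := (QuotientGroup.eq_one_iff n).mpr hn
      rw [hfg, h1, ht1, one_mul]
      exact (χ 1 * θ (ν n)).2
    · intro n
      show f (n : G) = (θ n : G)
      have h1 : (QuotientGroup.mk (n : G) : G ⧸ N) = 1 :=
        (QuotientGroup.eq_one_iff _).mpr n.2
      have h2 : ν (n : G) = n := by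
        apply Subtype.ext
        rw [hν, h1, ht1]
        group
      rw [hfg, h1, h2, ht1, hχ1, one_mul, one_mul]
    · intro g
      show (QuotientGroup.mk (f g) : G ⧸ N) = QuotientGroup.mk g
      rw [hfg, hmk_aux]
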